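/- The number of edges added by Algorithm Square in steps SQ4 and SQ5 while handling covered requests is at most 14·|opt|; in particular, Σ_{i : r_i covered} ρ(i) ≤ |opt|. -/

import Mathlib

open Finset

/-- A replica is a pair `(v, t)` of a network node and a time. -/
abbrev Replica : Type := ℕ × ℕ

/-- A (directed) grid edge is a pair of replicas. -/
abbrev GEdge : Type := Replica × Replica

/-- Horizontal directed edge `((v,t),(v+1,t))`. -/
def isHoriz (e : GEdge) : Prop := e.2 = (e.1.1 + 1, e.1.2)

/-- Vertical arc `((v,t),(v,t+1))`. -/
def isArc (e : GEdge) : Prop := e.2 = (e.1.1, e.1.2 + 1)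

def isGridEdge (e : GEdge) : Prop := isHoriz e ∨ isArc e

/-- The quarter ball `B(r,ρ)`: replicas `(u,s)` with `u ≤ v`, `s ≤ t` and
`(v−u)+(t−s) ≤ ρ`. -/
def qball (r : Replica) (ρ : ℕ) : Set Replica :=
  {q | q.1 ≤ r.1 ∧ q.2 ≤ r.2 ∧ (r.1 - q.1) + (r.2 - q.2) ≤ ρ}

/-- Grid edges with both endpoints in the quarter ball `B(r,ρ)`. -/
def ballEdge (r : Replica) (ρ : ℕ) (e : GEdge) : Prop :=
  isGridEdge e ∧ e.1 ∈ qball r ρ ∧ e.2 ∈ qball r ρ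

/-- Two quarter balls are edge-disjoint if they share no grid edge. -/
def BallsEdgeDisjoint (r : Replica) (ρ : ℕ) (r' : Replica) (ρ' : ℕ) : Prop :=
  ∀ e : GEdge, ¬ (ballEdge r ρ e ∧ ballEdge r' ρ' e)

/-- The square `Sq(r,ρ) = [v−ρ,v] × [t−ρ,t]`. -/
def SqRect (r : Replica) (ρ : ℕ) : Set Replica :=
  {q | r.1 - ρ ≤ q.1 ∧ q.1 ≤ r.1 ∧ r.2 - ρ ≤ q.2 ∧ q.2 ≤ r.2}

/-- Directed `L∞` distance `d∞(q,r)`: `max(v−u, t−s)` if `u ≤ v` and `s ≤ t`,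
and `∞` otherwise. -/
def distInf (q r : Replica) : ℕ∞ :=
  if q.1 ≤ r.1 ∧ q.2 ≤ r.2 then ((max (r.1 - q.1) (r.2 - q.2) : ℕ) : ℕ∞) else ⊤

/-- The replicas of an edge set: `(0,0)` together with all endpoints of its edges. -/
def Repl (F : Finset GEdge) : Set Replica :=
  insert ((0, 0) : Replica) {q | ∃ e ∈ F, q = e.1 ∨ q = e.2}

/-- The arcs of the vertical path at node `u` from time `s` to time `τ`. -/
def vertPath (u s τ : ℕ) : Finset GEdge :=
  (Finset.range (τ - s)).image (fun k => ((u, s + k), (u, s + k + 1)))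

/-- The horizontal edges of the path at time `τ` from node `u` to node `w`. -/
def horizPath (τ u w : ℕ) : Finset GEdge :=
  (Finset.range (w - u)).image (fun k => ((u + k, τ), (u + k + 1, τ)))

/-- A directed path from `a` to `b` all of whose edges belong to `F`. -/
def PathIn (F : Finset GEdge) (a b : Replica) : Prop :=
  ∃ (L : ℕ) (f : ℕ → Replica), f 0 = a ∧ f L = b ∧ ∀ k < L, (f k, f (k + 1)) ∈ F

/-- An execution of Algorithm `Square` on a request sequence
`r_1 = (v 1, t 1), …, r_N = (v N, t N)` (with `t 0 = 0` and nondecreasing times).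
`sol i` is the edge set after handling request `i`; `ρ i` is the radius of
request `i`; `(u' i, s' i)` is its closest replica and `(us i, ss i)` its
serving replica.  The fields record the specification SQ1–SQ5. -/
structure SquareRun where
  N : ℕ
  v : ℕ → ℕ
  t : ℕ → ℕ
  ρ : ℕ → ℕ
  u' : ℕ → ℕ
  s' : ℕ → ℕ
  us : ℕ → ℕ
  ss : ℕ → ℕ
  sol : ℕ → Finset GEdge
  t_zero : t 0 = 0
  t_mono : ∀ i j, i ≤ j → j ≤ N → t i ≤ t j
  sol_zero : sol 0 = ∅
  /-- SQ2: `ρ i` is a lower bound on the distance from every replica of the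
  current solution (after the SQ1 additions) to `r_i`. -/
  rho_min : ∀ i, 1 ≤ i → i ≤ N →
    ∀ q ∈ Repl (sol (i - 1) ∪ vertPath 0 (t (i - 1)) (t i)),
      (ρ i : ℕ∞) ≤ distInf q (v i, t i)
  /-- SQ2: the closest replica belongs to the current solution. -/
  closest_mem : ∀ i, 1 ≤ i → i ≤ N →
    (u' i, s' i) ∈ Repl (sol (i - 1) ∪ vertPath 0 (t (i - 1)) (t i))
  /-- SQ2: the closest replica attains the radius. -/
  closest_dist : ∀ i, 1 ≤ i → i ≤ N →
    distInf (u' i, s' i) (v i, t i) = (ρ i : ℕ∞)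
  /-- SQ2: among replicas of node `u' i`, the closest replica is the latest. -/
  closest_late : ∀ i, 1 ≤ i → i ≤ N → ∀ s, s ≤ t i →
    (u' i, s) ∈ Repl (sol (i - 1) ∪ vertPath 0 (t (i - 1)) (t i)) → s ≤ s' i
  /-- SQ3: the serving replica is in the current solution and in `Sq(r_i, 5ρ i)`. -/
  serv_mem : ∀ i, 1 ≤ i → i ≤ N →
    (us i, ss i) ∈ Repl (sol (i - 1) ∪ vertPath 0 (t (i - 1)) (t i)) ∧
      (us i, ss i) ∈ SqRect (v i, t i) (5 * ρ i)
  /-- SQ3: the serving node is leftmost. -/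
  serv_min : ∀ i, 1 ≤ i → i ≤ N →
    ∀ q ∈ Repl (sol (i - 1) ∪ vertPath 0 (t (i - 1)) (t i)),
      q ∈ SqRect (v i, t i) (5 * ρ i) → us i ≤ q.1
  /-- SQ3: among those, the serving time is latest. -/
  serv_late : ∀ i, 1 ≤ i → i ≤ N →
    ∀ q ∈ Repl (sol (i - 1) ∪ vertPath 0 (t (i - 1)) (t i)),
      q ∈ SqRect (v i, t i) (5 * ρ i) → q.1 = us i → q.2 ≤ ss i
  /-- SQ1 + SQ4 + SQ5: the edges added while handling request `i`. -/
  step : ∀ i, 1 ≤ i → i ≤ N →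
    sol i = (sol (i - 1) ∪ vertPath 0 (t (i - 1)) (t i))
      ∪ vertPath (us i) (ss i) (t i) ∪ horizPath (t i) (us i) (v i)
      ∪ vertPath (us i) (t i) (t i + 4 * ρ i)

namespace SquareRun

variable (S : SquareRun)

/-- The `i`-th request replica. -/
def req (i : ℕ) : Replica := (S.v i, S.t i)

/-- The edges added in steps SQ4 and SQ5 while handling request `i`. -/
def added45 (i : ℕ) : Finset GEdge :=
  vertPath (S.us i) (S.ss i) (S.t i) ∪ horizPath (S.t i) (S.us i) (S.v i)
    ∪ vertPath (S.us i) (S.t i) (S.t i + 4 * S.ρ i)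

/-- Request `i` is covered if `v_i − u^s_i ≥ ρ(i)`. -/
def covered (i : ℕ) : Prop := S.ρ i ≤ S.v i - S.us i

def uncovered (i : ℕ) : Prop := ¬ S.covered i

/-- A feasible solution of the DMCD instance given by the requests of `S`. -/
def Feasible (F : Finset GEdge) : Prop :=
  (∀ e ∈ F, isGridEdge e) ∧
  (∀ i, 1 ≤ i → i ≤ S.N → PathIn F (0, 0) (S.req i)) ∧
  (∀ τ, τ < S.t S.N → ∃ w, ((w, τ), (w, τ + 1)) ∈ F)

/-- `S.IsParent i j` means `parent(j) = i`:  `i` is the least index greater than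
`j` such that `r_i` is uncovered and `SQball(j)`, `SQball(i)` are not
edge-disjoint. -/
def IsParent (i j : ℕ) : Prop :=
  1 ≤ j ∧ j < i ∧ i ≤ S.N ∧ S.uncovered j ∧ S.uncovered i ∧
    ¬ BallsEdgeDisjoint (S.req j) (S.ρ j) (S.req i) (S.ρ i) ∧
    ∀ k, j < k → k < i → S.uncovered k →
      BallsEdgeDisjoint (S.req j) (S.ρ j) (S.req k) (S.ρ k)

/-- A root: an uncovered request with no parent. -/
def IsRoot (i : ℕ) : Prop :=
  1 ≤ i ∧ i ≤ S.N ∧ S.uncovered i ∧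
    ∀ j, i < j → j ≤ S.N → S.uncovered j →
      BallsEdgeDisjoint (S.req i) (S.ρ i) (S.req j) (S.ρ j)

/-- `i ∈ Tree(iStar)`: one can go from `i` to `iStar` by repeatedly passing from
a child to its parent. -/
def InTree (i iStar : ℕ) : Prop :=
  Relation.ReflTransGen (fun a b => S.IsParent b a) i iStar

end SquareRun

/-! ### Auxiliary lemmas -/

lemma zero_mem_Repl (F : Finset GEdge) : ((0, 0) : Replica) ∈ Repl F :=
  Set.mem_insert _ _

lemma mem_Repl_of_endpoint {F : Finset GEdge} {e : GEdge} (he : e ∈ F)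
    {q : Replica} (hq : q = e.1 ∨ q = e.2) : q ∈ Repl F :=
  Set.mem_insert_iff.mpr (Or.inr ⟨e, he, hq⟩)

lemma Repl_mono {F G : Finset GEdge} (h : F ⊆ G) : Repl F ⊆ Repl G := by
  intro q hq
  rcases Set.mem_insert_iff.mp hq with h0 | ⟨e, he, hq'⟩
  · exact h0 ▸ zero_mem_Repl G
  · exact mem_Repl_of_endpoint (h he) hq'

namespace SquareRun

variable (S : SquareRun)

lemma sol_mono : ∀ i j, i ≤ j → j ≤ S.N → S.sol i ⊆ S.sol j := by
  intro i j hij hjN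
  induction j with
  | zero => obtain rfl : i = 0 := Nat.le_zero.mp hij; exact subset_rfl
  | succ j ih =>
    rcases Nat.lt_or_ge i (j + 1) with h | h
    · have hstep : S.sol j ⊆ S.sol (j + 1) := by
        have := S.step (j + 1) (Nat.le_add_left 1 j) hjN
        simp only [Nat.add_sub_cancel] at this
        rw [this]
        intro e he
        simp only [Finset.mem_union]
        tauto
      exact (ih (by omega) (by omega)).trans hstep
    · obtain rfl : i = j + 1 := le_antisymm hij h
      exact subset_rfl

/-- Extract a numeric bound from `rho_min`. -/
lemma rho_le {j : ℕ} (h1 : 1 ≤ j) (h2 : j ≤ S.N) {q : Replica}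
    (hq : q ∈ Repl (S.sol (j - 1) ∪ vertPath 0 (S.t (j - 1)) (S.t j)))
    (hu : q.1 ≤ S.v j) (hs : q.2 ≤ S.t j) :
    S.ρ j ≤ max (S.v j - q.1) (S.t j - q.2) := by
  have h := S.rho_min j h1 h2 q hq
  rw [distInf, if_pos ⟨hu, hs⟩] at h
  exact_mod_cast h

/-- Any point of the horizontal path of step `i` is a replica of `sol i`. -/
lemma horiz_replica {i : ℕ} (h1 : 1 ≤ i) (h2 : i ≤ S.N) {w : ℕ}
    (hl : S.us i ≤ w) (hr : w ≤ S.v i) (hlt : S.us i < S.v i) :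
    ((w, S.t i) : Replica) ∈ Repl (S.sol i) := by
  have hsub : horizPath (S.t i) (S.us i) (S.v i) ⊆ S.sol i := by
    rw [S.step i h1 h2]
    intro e he
    simp only [Finset.mem_union]
    tauto
  rcases Nat.lt_or_ge w (S.v i) with hwv | hwv
  · have hmem : ((w, S.t i), (w + 1, S.t i)) ∈ horizPath (S.t i) (S.us i) (S.v i) := by
      simp only [horizPath, Finset.mem_image, Finset.mem_range]
      exact ⟨w - S.us i, by omega, by simp; omega⟩
    exact mem_Repl_of_endpoint (hsub hmem) (Or.inl rfl)
  · obtain rfl : w = S.v i := le_antisymm hr hwv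
    have hmem : ((S.v i - 1, S.t i), (S.v i, S.t i)) ∈ horizPath (S.t i) (S.us i) (S.v i) := by
      simp only [horizPath, Finset.mem_image, Finset.mem_range]
      exact ⟨S.v i - 1 - S.us i, by omega, by simp; omega⟩
    exact mem_Repl_of_endpoint (hsub hmem) (Or.inr rfl)

/-- Key disjointness lemma: if `i < j` and `r_i` is covered then the quarter
balls of `i` and `j` are edge-disjoint. -/
lemma balls_disjoint_of_covered {i j : ℕ} (h1 : 1 ≤ i) (hij : i < j)
    (hjN : j ≤ S.N) (hcov : S.covered i) :
    BallsEdgeDisjoint (S.req i) (S.ρ i) (S.req j) (S.ρ j) := by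
  intro e ⟨⟨hge, hi1, hi2⟩, ⟨_, hj1, hj2⟩⟩
  have hiN : i ≤ S.N := le_trans (le_of_lt hij) hjN
  -- unpack ball memberships
  simp only [qball, SquareRun.req, Set.mem_setOf_eq] at hi1 hi2 hj1 hj2
  obtain ⟨ha1, hb1, hl1⟩ := hi1
  obtain ⟨ha2, hb2, hl2⟩ := hi2
  obtain ⟨ha1', hb1', hl1'⟩ := hj1
  obtain ⟨ha2', hb2', hl2'⟩ := hj2
  -- the edge relation
  have hgrid : (e.2.1 = e.1.1 + 1 ∧ e.2.2 = e.1.2) ∨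
      (e.2.1 = e.1.1 ∧ e.2.2 = e.1.2 + 1) := by
    rcases hge with h | h
    · left; rw [h]; exact ⟨rfl, rfl⟩
    · right; rw [h]; exact ⟨rfl, rfl⟩
  -- covered data for i
  have hsq := (S.serv_mem i h1 hiN).2
  simp only [SqRect, Set.mem_setOf_eq] at hsq
  have hcov' : S.ρ i ≤ S.v i - S.us i := hcov
  have hρi : 1 ≤ S.ρ i := by omega
  have htmono : S.t i ≤ S.t j := S.t_mono i j (le_of_lt hij) hjN
  -- the replica (min (v j) (v i), t i) is in the solution before step j
  set w0 : ℕ := min (S.v j) (S.v i) with hw0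
  have hw0mem : ((w0, S.t i) : Replica) ∈
      Repl (S.sol (j - 1) ∪ vertPath 0 (S.t (j - 1)) (S.t j)) := by
    have h' : ((w0, S.t i) : Replica) ∈ Repl (S.sol i) :=
      S.horiz_replica h1 hiN (by omega) (by omega) (by omega)
    have hsub : S.sol i ⊆ S.sol (j - 1) := S.sol_mono i (j - 1) (by omega) (by omega)
    exact Repl_mono (hsub.trans Finset.subset_union_left) h'
  have hρj : S.ρ j ≤ max (S.v j - w0) (S.t j - S.t i) :=
    S.rho_le (by omega) hjN hw0mem (min_le_left _ _) htmono
  omega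

open scoped Classical in
/-- Any feasible solution contains at least `ρ i` edges inside the quarter
ball `B(r_i, ρ i)`. -/
lemma opt_ball_edges {F : Finset GEdge} (hF : S.Feasible F) {i : ℕ}
    (h1 : 1 ≤ i) (h2 : i ≤ S.N) :
    S.ρ i ≤ (F.filter (fun e => ballEdge (S.req i) (S.ρ i) e)).card := by
  obtain ⟨L, f, hf0, hfL, hmem⟩ := hF.2.1 i h1 h2
  have hstep : ∀ k < L, (f (k + 1) = ((f k).1 + 1, (f k).2)) ∨
      (f (k + 1) = ((f k).1, (f k).2 + 1)) := by
    intro k hk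
    have hg := hF.1 _ (hmem k hk)
    rcases hg with h | h
    · exact Or.inl h
    · exact Or.inr h
  have hsum : ∀ k ≤ L, (f k).1 + (f k).2 = k := by
    intro k
    induction k with
    | zero => intro _; rw [hf0]; rfl
    | succ k ih =>
      intro hk
      have h' := ih (by omega)
      rcases hstep k (by omega) with h | h <;> rw [h] <;> simp <;> omega
  have hmono : ∀ k l, k ≤ l → l ≤ L → (f k).1 ≤ (f l).1 ∧ (f k).2 ≤ (f l).2 := by
    intro k l hkl
    induction l with
    | zero => intro _; obtain rfl : k = 0 := Nat.le_zero.mp hkl; exact ⟨le_rfl, le_rfl⟩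
    | succ l ih =>
      intro hl
      rcases Nat.lt_or_ge k (l + 1) with h | h
      · have h' := ih (by omega) (by omega)
        rcases hstep l (by omega) with hs | hs <;> rw [hs] <;> simp <;> omega
      · obtain rfl : k = l + 1 := le_antisymm hkl h
        exact ⟨le_rfl, le_rfl⟩
  have hLsum : (S.v i) + (S.t i) = L := by
    have h := hsum L le_rfl
    rw [hfL] at h
    exact h
  have hρL : S.ρ i ≤ L := by
    have h0 : ((0, 0) : Replica) ∈
        Repl (S.sol (i - 1) ∪ vertPath 0 (S.t (i - 1)) (S.t i)) := zero_mem_Repl _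
    have h := S.rho_le h1 h2 h0 (Nat.zero_le _) (Nat.zero_le _)
    simp at h
    omega
  have hball : ∀ m, L - S.ρ i ≤ m → m ≤ L → f m ∈ qball (S.req i) (S.ρ i) := by
    intro m hm1 hm2
    have hmn := hmono m L hm2 le_rfl
    rw [hfL] at hmn
    have hs := hsum m hm2
    have hreq1 : (S.req i).1 = S.v i := rfl
    have hreq2 : (S.req i).2 = S.t i := rfl
    rw [hreq1, hreq2] at hmn
    simp only [qball, SquareRun.req, Set.mem_setOf_eq]
    exact ⟨hmn.1, hmn.2, by omega⟩
  have hinj : Set.InjOn (fun k => (f (L - S.ρ i + k), f (L - S.ρ i + k + 1)))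
      (Finset.range (S.ρ i)) := by
    intro a ha' b hb' hab
    simp only [Finset.coe_range, Set.mem_Iio] at ha' hb'
    have h1' : f (L - S.ρ i + a) = f (L - S.ρ i + b) := congrArg Prod.fst hab
    have ha := hsum (L - S.ρ i + a) (by omega)
    have hb := hsum (L - S.ρ i + b) (by omega)
    rw [h1'] at ha
    omega
  calc S.ρ i = (Finset.range (S.ρ i)).card := (Finset.card_range _).symm
    _ ≤ (F.filter (fun e => ballEdge (S.req i) (S.ρ i) e)).card := by
        apply Finset.card_le_card_of_injOn _ _ hinj
        intro k hk
        simp only [Finset.mem_coe, Finset.mem_range] at hk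
        have hkL : L - S.ρ i + k < L := by omega
        have hmemF := hmem _ hkL
        refine Finset.mem_filter.mpr ⟨hmemF, hF.1 _ hmemF, ?_, ?_⟩
        · exact hball _ (by omega) (by omega)
        · exact hball (L - S.ρ i + k + 1) (by omega) (by omega)

/-- The number of edges added in steps SQ4–SQ5 for request `i` is at most
`14 ρ i`. -/
lemma added45_card_le {i : ℕ} (h1 : 1 ≤ i) (h2 : i ≤ S.N) :
    (S.added45 i).card ≤ 14 * S.ρ i := by
  have hsq := (S.serv_mem i h1 h2).2
  simp only [SqRect, Set.mem_setOf_eq] at hsq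
  have c1 : (vertPath (S.us i) (S.ss i) (S.t i)).card ≤ S.t i - S.ss i := by
    refine le_trans Finset.card_image_le ?_
    rw [Finset.card_range]
  have c2 : (horizPath (S.t i) (S.us i) (S.v i)).card ≤ S.v i - S.us i := by
    refine le_trans Finset.card_image_le ?_
    rw [Finset.card_range]
  have c3 : (vertPath (S.us i) (S.t i) (S.t i + 4 * S.ρ i)).card ≤ 4 * S.ρ i := by
    refine le_trans Finset.card_image_le ?_
    rw [Finset.card_range]
    omega
  have h4 := Finset.card_union_le
    (vertPath (S.us i) (S.ss i) (S.t i) ∪ horizPath (S.t i) (S.us i) (S.v i))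
    (vertPath (S.us i) (S.t i) (S.t i + 4 * S.ρ i))
  have h5 := Finset.card_union_le (vertPath (S.us i) (S.ss i) (S.t i))
    (horizPath (S.t i) (S.us i) (S.v i))
  simp only [SquareRun.added45]
  omega

end SquareRun

open scoped Classical in
/-- The number of edges added by Square in steps SQ4–SQ5 while handling covered
requests is at most `14·|opt|`; in particular the sum of the radii of the
covered requests is at most `|opt|`. -/
theorem covered_cost_le (S : SquareRun) :
    ∀ F : Finset GEdge, S.Feasible F →
      (((Finset.Icc 1 S.N).filter S.covered).biUnion S.added45).card ≤
          14 * F.card ∧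
        ∑ i ∈ (Finset.Icc 1 S.N).filter S.covered, S.ρ i ≤ F.card := by
  intro F hF
  set C : Finset ℕ := (Finset.Icc 1 S.N).filter S.covered with hC
  have hmemC : ∀ i ∈ C, 1 ≤ i ∧ i ≤ S.N ∧ S.covered i := by
    intro i hi
    rw [hC, Finset.mem_filter, Finset.mem_Icc] at hi
    tauto
  have hdisj : ∀ i ∈ C, ∀ j ∈ C, i ≠ j →
      Disjoint (F.filter (fun e => ballEdge (S.req i) (S.ρ i) e))
        (F.filter (fun e => ballEdge (S.req j) (S.ρ j) e)) := by
    have key : ∀ i ∈ C, ∀ j ∈ C, i < j →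
        Disjoint (F.filter (fun e => ballEdge (S.req i) (S.ρ i) e))
          (F.filter (fun e => ballEdge (S.req j) (S.ρ j) e)) := by
      intro i hi j hj hij
      obtain ⟨hi1, hi2, hic⟩ := hmemC i hi
      obtain ⟨hj1, hj2, hjc⟩ := hmemC j hj
      rw [Finset.disjoint_left]
      intro e he he'
      rw [Finset.mem_filter] at he he'
      exact S.balls_disjoint_of_covered hi1 hij hj2 hic e ⟨he.2, he'.2⟩
    intro i hi j hj hne
    rcases Nat.lt_or_ge i j with h | h
    · exact key i hi j hj h
    · exact (key j hj i hi (by omega)).symm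
  have hsum : ∑ i ∈ C, S.ρ i ≤ F.card := by
    calc ∑ i ∈ C, S.ρ i
        ≤ ∑ i ∈ C, (F.filter (fun e => ballEdge (S.req i) (S.ρ i) e)).card := by
          refine Finset.sum_le_sum ?_
          intro i hi
          obtain ⟨hi1, hi2, _⟩ := hmemC i hi
          exact S.opt_ball_edges hF hi1 hi2
      _ = (C.biUnion (fun i => F.filter (fun e => ballEdge (S.req i) (S.ρ i) e))).card :=
          (Finset.card_biUnion hdisj).symm
      _ ≤ F.card := by
          refine Finset.card_le_card ?_
          intro e he
          rw [Finset.mem_biUnion] at he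
          obtain ⟨i, _, he⟩ := he
          exact (Finset.mem_filter.mp he).1
  refine ⟨?_, hsum⟩
  calc (C.biUnion S.added45).card
      ≤ ∑ i ∈ C, (S.added45 i).card := Finset.card_biUnion_le
    _ ≤ ∑ i ∈ C, 14 * S.ρ i := by
        refine Finset.sum_le_sum ?_
        intro i hi
        obtain ⟨hi1, hi2, _⟩ := hmemC i hi
        exact S.added45_card_le hi1 hi2
    _ = 14 * ∑ i ∈ C, S.ρ i := (Finset.mul_sum _ _ _).symm
    _ ≤ 14 * F.card := Nat.mul_le_mul_left 14 hsum
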